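/- Any twice differentiable Bregman divergence decomposes as an integral of V-shaped Bregman divergences: for u : [0,1] → [0,1] twice differentiable convex and any p, p̂ ∈ [0,1], u(p̂) − u(p) + u'(p)(p − p̂) = ∫_0^1 u''(μ) · max(1−μ, μ) · VBreg_μ(p, p̂) dμ, where VBreg_μ(q, q̂) = 0 if q and q̂ are on the same side of μ (i.e., q < μ and q̂ ≤ μ, or q ≥ μ and q̂ ≥ μ), and VBreg_μ(q, q̂) = |q̂ − μ| / max(1−μ, μ) otherwise. -/
import Mathlib

/-- The V-Bregman divergence with kink μ. -/
noncomputable def VBreg (μ q qh : ℝ) : ℝ :=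
  if (q < μ ∧ qh ≤ μ) ∨ (μ ≤ q ∧ μ ≤ qh) then 0 else |qh - μ| / max (1 - μ) μ

/-- Any twice differentiable Bregman divergence decomposes as an
integral of V-shaped Bregman divergences. -/
theorem stmt_4 (u u' u'' : ℝ → ℝ)
    (hconv : ConvexOn ℝ (Set.Icc (0:ℝ) 1) u)
    (hrange : ∀ x ∈ Set.Icc (0:ℝ) 1, u x ∈ Set.Icc (0:ℝ) 1)
    (hd1 : ∀ x ∈ Set.Icc (0:ℝ) 1, HasDerivWithinAt u (u' x) (Set.Icc (0:ℝ) 1) x)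
    (hd2 : ∀ x ∈ Set.Icc (0:ℝ) 1, HasDerivWithinAt u' (u'' x) (Set.Icc (0:ℝ) 1) x)
    (p ph : ℝ) (hp : p ∈ Set.Icc (0:ℝ) 1) (hph : ph ∈ Set.Icc (0:ℝ) 1) :
    u ph - u p + u' p * (p - ph)
      = ∫ μ in (0:ℝ)..1, u'' μ * max (1 - μ) μ * VBreg μ p ph := by
  obtain ⟨hp0, hp1⟩ := hp
  obtain ⟨hph0, hph1⟩ := hph
  have hpI : p ∈ Set.Icc (0:ℝ) 1 := ⟨hp0, hp1⟩
  have hphI : ph ∈ Set.Icc (0:ℝ) 1 := ⟨hph0, hph1⟩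
  have huIcc_sub : Set.uIcc p ph ⊆ Set.Icc (0:ℝ) 1 := Set.uIcc_subset_Icc hpI hphI
  have hIoo_sub : Set.Ioo (min p ph) (max p ph) ⊆ Set.Ioo (0:ℝ) 1 := by
    intro x hx
    exact ⟨lt_of_le_of_lt (le_min hp0 hph0) hx.1, lt_of_lt_of_le hx.2 (max_le hp1 hph1)⟩
  -- continuity of u and u'
  have hcontu : ContinuousOn u (Set.Icc (0:ℝ) 1) := fun x hx => (hd1 x hx).continuousWithinAt
  have hcontu' : ContinuousOn u' (Set.Icc (0:ℝ) 1) := fun x hx => (hd2 x hx).continuousWithinAt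
  -- u' is monotone on [0,1]
  have hu'mono : MonotoneOn u' (Set.Icc (0:ℝ) 1) := by
    intro x hx y hy hxy
    rcases eq_or_lt_of_le hxy with rfl | hlt
    · exact le_refl _
    exact (hconv.le_slope_of_hasDerivWithinAt hx hy hlt (hd1 x hx)).trans
      (hconv.slope_le_of_hasDerivWithinAt hx hy hlt (hd1 y hy))
  -- u'' ≥ 0 on the interior
  have hu''nonneg : ∀ x ∈ Set.Ioo (0:ℝ) 1, 0 ≤ u'' x := by
    intro x hx
    have hmem : Set.Icc (0:ℝ) 1 ∈ nhds x := Icc_mem_nhds hx.1 hx.2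
    have hder : HasDerivAt u' (u'' x) x := (hd2 x (Set.Ioo_subset_Icc_self hx)).hasDerivAt hmem
    have htend := hasDerivAt_iff_tendsto_slope.mp hder
    have htend' : Filter.Tendsto (slope u' x) (nhdsWithin x (Set.Ioi x)) (nhds (u'' x)) :=
      htend.mono_left (nhdsWithin_mono x
        (fun y hy => Set.mem_compl_singleton_iff.mpr (ne_of_gt hy)))
    refine ge_of_tendsto htend' ?_
    filter_upwards [Ioo_mem_nhdsGT_of_mem ⟨le_refl x, hx.2⟩] with y hy
    have hxy : x < y := hy.1
    have hle : u' x ≤ u' y :=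
      hu'mono ⟨hx.1.le, hx.2.le⟩ ⟨(hx.1.trans hxy).le, hy.2.le⟩ hxy.le
    rw [slope_def_field]
    exact div_nonneg (by linarith) (by linarith)
  -- interval integrability
  have hu''int : IntervalIntegrable u'' MeasureTheory.volume p ph := by
    apply intervalIntegral.intervalIntegrable_deriv_of_nonneg (hcontu'.mono huIcc_sub)
    · intro x hx
      have hx' := hIoo_sub hx
      exact (hd2 x (Set.Ioo_subset_Icc_self hx')).hasDerivAt (Icc_mem_nhds hx'.1 hx'.2)
    · exact fun x hx => hu''nonneg x (hIoo_sub hx)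
  have hint : IntervalIntegrable (fun μ => u'' μ * (ph - μ)) MeasureTheory.volume p ph :=
    hu''int.mul_continuousOn ((continuous_const.sub continuous_id).continuousOn)
  -- FTC: the Taylor remainder formula
  set F : ℝ → ℝ := fun μ => (ph - μ) * u' μ + u μ with hF
  have hFcont : ContinuousOn F (Set.uIcc p ph) :=
    (((continuous_const.sub continuous_id).continuousOn.mul hcontu').add hcontu).mono huIcc_sub
  have hFderiv : ∀ x ∈ Set.Ioo (min p ph) (max p ph),
      HasDerivWithinAt F (u'' x * (ph - x)) (Set.Ioi x) x := by
    intro x hx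
    have hx' := hIoo_sub hx
    have hmem : Set.Icc (0:ℝ) 1 ∈ nhds x := Icc_mem_nhds hx'.1 hx'.2
    have h1 : HasDerivAt u (u' x) x := (hd1 x (Set.Ioo_subset_Icc_self hx')).hasDerivAt hmem
    have h2 : HasDerivAt u' (u'' x) x := (hd2 x (Set.Ioo_subset_Icc_self hx')).hasDerivAt hmem
    have h3 : HasDerivAt F (-1 * u' x + (ph - x) * u'' x + u' x) x :=
      (((hasDerivAt_id x).const_sub ph).mul h2).add h1
    have heq : -1 * u' x + (ph - x) * u'' x + u' x = u'' x * (ph - x) := by ring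
    rw [heq] at h3
    exact h3.hasDerivWithinAt
  have hftc : ∫ μ in p..ph, u'' μ * (ph - μ) = u ph - u p + u' p * (p - ph) := by
    rw [intervalIntegral.integral_eq_sub_of_hasDeriv_right hFcont hFderiv hint]
    simp only [hF]
    ring
  -- pointwise identity between the integrand and an indicator function
  have hfun : ∀ μ : ℝ, u'' μ * max (1 - μ) μ * VBreg μ p ph
      = (Set.uIoc p ph).indicator (fun ν => u'' ν * |ph - ν|) μ := by
    intro μ
    have hm : (0:ℝ) < max (1 - μ) μ := by
      rcases lt_or_ge 0 μ with h | h
      · exact lt_max_iff.mpr (Or.inr h)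
      · exact lt_max_iff.mpr (Or.inl (by linarith))
    by_cases hc : (p < μ ∧ ph ≤ μ) ∨ (μ ≤ p ∧ μ ≤ ph)
    · rw [VBreg, if_pos hc, mul_zero]
      by_cases hμ : μ ∈ Set.uIoc p ph
      · rw [Set.indicator_of_mem hμ]
        have hμph : μ = ph := by
          rcases Set.mem_uIoc.mp hμ with ⟨h1, h2⟩ | ⟨h1, h2⟩ <;>
            rcases hc with ⟨h3, h4⟩ | ⟨h3, h4⟩ <;> linarith
        simp [hμph]
      · rw [Set.indicator_of_notMem hμ]
    · rw [VBreg, if_neg hc]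
      push_neg at hc
      obtain ⟨h1, h2⟩ := hc
      have hμ : μ ∈ Set.uIoc p ph := by
        rw [Set.mem_uIoc]
        rcases le_or_gt μ p with h | h
        · exact Or.inr ⟨h2 h, h⟩
        · exact Or.inl ⟨h, (h1 h).le⟩
      rw [Set.indicator_of_mem hμ]
      rw [mul_assoc, mul_comm (max (1 - μ) μ), div_mul_cancel₀ _ (ne_of_gt hm)]
  -- reduce the RHS integral
  have hsub : Set.uIoc p ph ⊆ Set.Ioc (0:ℝ) 1 := by
    intro x hx
    rcases Set.mem_uIoc.mp hx with ⟨h1, h2⟩ | ⟨h1, h2⟩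
    · exact ⟨lt_of_le_of_lt hp0 h1, h2.trans hph1⟩
    · exact ⟨lt_of_le_of_lt hph0 h1, h2.trans hp1⟩
  have key : ∫ μ in p..ph, u'' μ * (ph - μ)
      = ∫ μ in Set.uIoc p ph, u'' μ * |ph - μ| := by
    rcases le_total p ph with h | h
    · rw [Set.uIoc_of_le h, intervalIntegral.integral_of_le h]
      apply MeasureTheory.setIntegral_congr_fun measurableSet_Ioc
      intro μ hμ
      have h2 : |ph - μ| = ph - μ := abs_of_nonneg (by linarith [hμ.2])
      simp only [h2]
    · rw [Set.uIoc_of_ge h, intervalIntegral.integral_symm,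
        intervalIntegral.integral_of_le h, ← MeasureTheory.integral_neg]
      apply MeasureTheory.setIntegral_congr_fun measurableSet_Ioc
      intro μ hμ
      have h2 : |ph - μ| = μ - ph := by
        rw [abs_of_nonpos (by linarith [hμ.1])]; ring
      simp only [h2]; ring
  have hR : ∫ μ in (0:ℝ)..1, u'' μ * max (1 - μ) μ * VBreg μ p ph
      = ∫ μ in p..ph, u'' μ * (ph - μ) := by
    rw [intervalIntegral.integral_congr (g := fun μ =>
        (Set.uIoc p ph).indicator (fun ν => u'' ν * |ph - ν|) μ) (fun μ _ => hfun μ)]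
    rw [intervalIntegral.integral_of_le zero_le_one,
      MeasureTheory.setIntegral_indicator measurableSet_uIoc,
      Set.inter_eq_right.mpr hsub, key]
  rw [hR, hftc]
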